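/- The leverage of any unit assigned treatment z_j equals 1/n_j: h̃_j (Xᵀ X)^{-1} h̃_jᵀ = 1/n_j. -/

import Mathlib

open Matrix Finset

lemma vecMulVec_mul_vecMulVec' {m : Type*} [Fintype m] (a b c d : m → ℝ) :
    vecMulVec a b * vecMulVec c d = (dotProduct b c) • vecMulVec a d := by
  ext i k
  simp only [Matrix.mul_apply, vecMulVec_apply, Matrix.smul_apply, smul_eq_mul, dotProduct]
  rw [Finset.sum_mul]
  apply Finset.sum_congr rfl
  intros; ring

/-- The leverage of any unit assigned treatment `z_j` equals `1/n_j`: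
`h̃_j (Xᵀ X)⁻¹ h̃_jᵀ = 1/n_j`, where
`Xᵀ X = ∑_{j'} n_{j'} h̃_{j'}ᵀ h̃_{j'}` with all `n_{j'} ≥ 1`. -/
theorem stmt15 (K : ℕ) (n : Fin (2 ^ K) → ℕ) (hn : ∀ j, 1 ≤ n j)
    (H : Matrix (Fin (2 ^ K)) (Fin (2 ^ K)) ℝ)
    (hdot : ∀ j j', dotProduct (H j) (H j') =
      if j = j' then (2 : ℝ) ^ K else 0)
    (M : Matrix (Fin (2 ^ K)) (Fin (2 ^ K)) ℝ)
    (hM : M = ∑ j', (n j' : ℝ) • vecMulVec (H j') (H j')) :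
    ∀ j, dotProduct (H j) (M⁻¹.mulVec (H j)) = (n j : ℝ)⁻¹ := by
  intro j
  set c : ℝ := (2 : ℝ) ^ K with hc
  have hc0 : c ≠ 0 := by positivity
  have hnj0 : ∀ j', (n j' : ℝ) ≠ 0 := fun j' => by
    exact_mod_cast Nat.one_le_iff_ne_zero.mp (hn j')
  -- H * Hᵀ = c • 1
  have hHHt : H * Hᵀ = c • 1 := by
    ext a b
    have := hdot a b
    simp only [dotProduct] at this
    simp [Matrix.mul_apply, Matrix.one_apply, this]
  -- Hᵀ * H = c • 1
  have hHtH : Hᵀ * H = c • 1 := by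
    have h1 : H * (c⁻¹ • Hᵀ) = 1 := by
      rw [Matrix.mul_smul, hHHt, smul_smul, inv_mul_cancel₀ hc0, one_smul]
    have h2 : (c⁻¹ • Hᵀ) * H = 1 := mul_eq_one_comm.mp h1
    calc Hᵀ * H = c • ((c⁻¹ • Hᵀ) * H) := by
          rw [Matrix.smul_mul, smul_smul, mul_inv_cancel₀ hc0, one_smul]
      _ = c • 1 := by rw [h2]
  have hsum : ∑ j', vecMulVec (H j') (H j') = c • (1 : Matrix (Fin (2^K)) (Fin (2^K)) ℝ) := by
    have h : ∑ j', vecMulVec (H j') (H j') = Hᵀ * H := by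
      ext i k
      simp [Matrix.sum_apply, vecMulVec_apply, Matrix.mul_apply, transpose_apply]
    rw [h, hHtH]
  set N : Matrix (Fin (2 ^ K)) (Fin (2 ^ K)) ℝ :=
    ∑ j', ((n j' : ℝ) * c ^ 2)⁻¹ • vecMulVec (H j') (H j') with hN
  have hMN : M * N = 1 := by
    rw [hM, hN, Finset.sum_mul_sum]
    have hterm : ∀ j1 j2 : Fin (2^K),
        ((n j1 : ℝ) • vecMulVec (H j1) (H j1)) * (((n j2 : ℝ) * c ^ 2)⁻¹ • vecMulVec (H j2) (H j2))
        = if j1 = j2 then c⁻¹ • vecMulVec (H j1) (H j1) else 0 := by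
      intro j1 j2
      rw [Matrix.smul_mul, Matrix.mul_smul, vecMulVec_mul_vecMulVec', hdot, smul_smul, smul_smul]
      by_cases h : j1 = j2
      · subst h
        simp only [if_pos rfl]
        congr 1
        field_simp
        simp only [if_true]
        exact mul_div_cancel_left₀ c (hnj0 j1)
      · simp [h]
    calc (∑ j1, ∑ j2, ((n j1 : ℝ) • vecMulVec (H j1) (H j1)) *
            (((n j2 : ℝ) * c ^ 2)⁻¹ • vecMulVec (H j2) (H j2)))
        = ∑ j1 : Fin (2^K), ∑ j2 : Fin (2^K),
            if j1 = j2 then c⁻¹ • vecMulVec (H j1) (H j1) else 0 := by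
          apply Finset.sum_congr rfl; intro j1 _
          apply Finset.sum_congr rfl; intro j2 _
          exact hterm j1 j2
      _ = ∑ j1 : Fin (2^K), c⁻¹ • vecMulVec (H j1) (H j1) := by
          apply Finset.sum_congr rfl; intro j1 _
          simp
      _ = c⁻¹ • ∑ j1 : Fin (2^K), vecMulVec (H j1) (H j1) := by
          rw [Finset.smul_sum]
      _ = 1 := by rw [hsum, smul_smul, inv_mul_cancel₀ hc0, one_smul]
  have hNM : N * M = 1 := mul_eq_one_comm.mp hMN
  have hinv : M⁻¹ = N := Matrix.inv_eq_right_inv hMN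
  -- M.mulVec (H j) = (n j * c) • H j
  have hMv : M.mulVec (H j) = ((n j : ℝ) * c) • H j := by
    funext i
    simp only [hM, Matrix.mulVec, dotProduct, Matrix.sum_apply, Matrix.smul_apply, vecMulVec_apply,
      smul_eq_mul, Pi.smul_apply]
    simp_rw [Finset.sum_mul]
    rw [Finset.sum_comm]
    calc ∑ j' : Fin (2^K), ∑ k : Fin (2^K), (n j' : ℝ) * (H j' i * H j' k) * H j k
        = ∑ j' : Fin (2^K), (n j' : ℝ) * H j' i * (if j' = j then c else 0) := by
          apply Finset.sum_congr rfl; intro j' _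
          rw [← hdot j' j]
          simp only [dotProduct, Finset.mul_sum]
          apply Finset.sum_congr rfl; intros; ring
      _ = (n j : ℝ) * H j i * c := by
          rw [Finset.sum_eq_single j]
          · simp
          · intro b _ hb; simp [hb]
          · simp
      _ = (n j : ℝ) * c * H j i := by ring
  -- hence N.mulVec (H j) = (n j * c)⁻¹ • H j
  have hNv : N.mulVec (H j) = ((n j : ℝ) * c)⁻¹ • H j := by
    have h1 : N.mulVec (M.mulVec (H j)) = H j := by
      rw [Matrix.mulVec_mulVec, hNM, Matrix.one_mulVec]
    rw [hMv, Matrix.mulVec_smul] at h1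
    have hne : (n j : ℝ) * c ≠ 0 := mul_ne_zero (hnj0 j) hc0
    calc N.mulVec (H j) = ((n j : ℝ) * c)⁻¹ • (((n j : ℝ) * c) • N.mulVec (H j)) := by
          rw [smul_smul, inv_mul_cancel₀ hne, one_smul]
      _ = ((n j : ℝ) * c)⁻¹ • H j := by rw [h1]
  rw [hinv, hNv, dotProduct_smul, hdot]
  simp only [mul_inv, smul_eq_mul, if_pos rfl]
  rw [if_true, mul_assoc, inv_mul_cancel₀ hc0, mul_one]
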